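/- For every integer k ≥ −1, the discriminant of the polynomial g_k(X) = X^3 + kX^2 − (k+3)X + 1 equals (k^2 + 3k + 9)^2; in particular it is a nonzero perfect square, so if g_k is irreducible over ℚ then ℚ(λ) is a cyclic cubic field for any root λ. -/

import Mathlib

open Polynomial NumberField IntermediateField

theorem unit_eq_stmt18 (k : ℤ) (hk : -1 ≤ k) :
    (Cubic.mk 1 k (-(k + 3)) 1).discr = (k ^ 2 + 3 * k + 9) ^ 2 ∧
    (k ^ 2 + 3 * k + 9) ^ 2 ≠ 0 ∧
    (∃ s : ℤ, (Cubic.mk 1 k (-(k + 3)) 1).discr = s ^ 2) ∧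
    (Irreducible (X ^ 3 + C (k : ℚ) * X ^ 2 - C ((k : ℚ) + 3) * X + 1 : Polynomial ℚ) →
      ∀ (K : Type) [Field K] [NumberField K] (lam : K),
        lam ^ 3 + (k : K) * lam ^ 2 - ((k : K) + 3) * lam + 1 = 0 →
          Module.finrank ℚ (ℚ⟮lam⟯ : IntermediateField ℚ K) = 3 ∧
          IsGalois ℚ (ℚ⟮lam⟯ : IntermediateField ℚ K) ∧
          IsCyclic ((ℚ⟮lam⟯ : IntermediateField ℚ K) ≃ₐ[ℚ] (ℚ⟮lam⟯ : IntermediateField ℚ K))) := by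
  have hdisc : (Cubic.mk 1 k (-(k + 3)) 1).discr = (k ^ 2 + 3 * k + 9) ^ 2 := by
    simp only [Cubic.discr]; ring
  have hne : (k ^ 2 + 3 * k + 9) ^ 2 ≠ 0 := by
    have : 0 < k ^ 2 + 3 * k + 9 := by nlinarith
    positivity
  refine ⟨hdisc, hne, ⟨k ^ 2 + 3 * k + 9, hdisc⟩, ?_⟩
  intro hirr K _ _ lam hlam
  set p : ℚ[X] := X ^ 3 + C (k : ℚ) * X ^ 2 - C ((k : ℚ) + 3) * X + 1 with hp
  have hmonic : p.Monic := by rw [hp]; monicity!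
  have hdeg : p.natDegree = 3 := by rw [hp]; compute_degree!
  have haev : aeval lam p = 0 := by
    rw [hp]
    simp only [map_add, map_sub, map_mul, map_pow, aeval_X, aeval_C, map_one,
      map_intCast, map_ofNat]
    linear_combination hlam
  have hint : IsIntegral ℚ lam := IsIntegral.of_finite ℚ lam
  have hmin : minpoly ℚ lam = p := (minpoly.eq_of_irreducible_of_monic hirr haev hmonic).symm
  have hfin : Module.finrank ℚ (ℚ⟮lam⟯ : IntermediateField ℚ K) = 3 := by
    rw [IntermediateField.adjoin.finrank hint, hmin, hdeg]
  -- roots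
  have hl0 : lam ≠ 0 := by
    rintro rfl; simp at hlam
  have hl1 : (1 : K) - lam ≠ 0 := by
    intro h
    have h1 : lam = 1 := (sub_eq_zero.mp h).symm
    rw [h1] at hlam
    have : (-1 : K) = 0 := by linear_combination hlam
    norm_num at this
  set b : K := (1 - lam)⁻¹ with hb
  set c : K := 1 - lam⁻¹ with hc
  have e1 : lam + b + c = -(k : K) := by
    rw [hb, hc]
    field_simp
    linear_combination -hlam
  have e2 : lam * b + lam * c + b * c = -((k : K) + 3) := by
    rw [hb, hc]
    field_simp
    linear_combination -hlam
  have e3 : lam * b * c = -1 := by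
    rw [hb, hc]
    field_simp
    ring
  have hmap : p.map (algebraMap ℚ K) = (X - C lam) * (X - C b) * (X - C c) := by
    have E1 : (C lam + C b + C c : K[X]) = -(C (k : K)) := by
      rw [← C_add, ← C_add, ← C_neg]; exact congrArg C e1
    have E2 : (C lam * C b + C lam * C c + C b * C c : K[X]) =
        -(C (k : K) + C (3 : K)) := by
      rw [← C_mul, ← C_mul, ← C_mul, ← C_add, ← C_add, ← C_add, ← C_neg]
      exact congrArg C e2
    have E3 : (C lam * C b * C c : K[X]) = -1 := by
      rw [← C_mul, ← C_mul, ← C_1, ← C_neg]; exact congrArg C e3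
    rw [hp]
    simp only [Polynomial.map_add, Polynomial.map_sub, Polynomial.map_mul,
      Polynomial.map_pow, Polynomial.map_X, Polynomial.map_C, Polynomial.map_one,
      map_intCast, map_ofNat, C_add, Polynomial.map_intCast, Polynomial.map_ofNat]
    simp only [C_eq_intCast, map_ofNat] at E1 E2 E3
    linear_combination (X : K[X]) ^ 2 * E1 - (X : K[X]) * E2 + E3
  have hpne : p ≠ 0 := hmonic.ne_zero
  have hsplits : (p.map (algebraMap ℚ K)).Splits := by
    rw [hmap]
    exact ((Splits.X_sub_C _).mul (Splits.X_sub_C _)).mul (Splits.X_sub_C _)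
  have hroots : p.rootSet K ⊆ (ℚ⟮lam⟯ : IntermediateField ℚ K) := by
    intro x hx
    rw [Polynomial.mem_rootSet] at hx
    have hprod : (x - lam) * (x - b) * (x - c) = 0 := by
      have h0 := hx.2
      rw [aeval_def, ← Polynomial.eval_map, hmap] at h0
      simpa using h0
    have hlmem : lam ∈ (ℚ⟮lam⟯ : IntermediateField ℚ K) :=
      IntermediateField.mem_adjoin_simple_self ℚ lam
    rcases mul_eq_zero.mp hprod with h | h
    · rcases mul_eq_zero.mp h with h | h
      · rw [sub_eq_zero.mp h]; exact hlmem
      · rw [sub_eq_zero.mp h, hb]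
        exact inv_mem (sub_mem (one_mem _) hlmem)
    · rw [sub_eq_zero.mp h, hc]
      exact sub_mem (one_mem _) (inv_mem hlmem)
  have hadj : IntermediateField.adjoin ℚ (p.rootSet K) = (ℚ⟮lam⟯ : IntermediateField ℚ K) := by
    apply le_antisymm
    · exact IntermediateField.adjoin_le_iff.mpr hroots
    · exact IntermediateField.adjoin_simple_le_iff.mpr
        (IntermediateField.subset_adjoin ℚ _ (Polynomial.mem_rootSet.mpr ⟨hpne, haev⟩))
  have hsf : p.IsSplittingField ℚ (ℚ⟮lam⟯ : IntermediateField ℚ K) := by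
    refine IntermediateField.isSplittingField_iff.mpr ?_
    exact ⟨IntermediateField.splits_of_splits hsplits hroots, hadj.symm⟩
  haveI := hsf
  haveI hnormal : Normal ℚ (ℚ⟮lam⟯ : IntermediateField ℚ K) := Normal.of_isSplittingField p
  haveI : FiniteDimensional ℚ (ℚ⟮lam⟯ : IntermediateField ℚ K) :=
    IntermediateField.adjoin.finiteDimensional hint
  have hgal : IsGalois ℚ (ℚ⟮lam⟯ : IntermediateField ℚ K) := ⟨⟩
  haveI := hgal
  haveI : Fact (Nat.Prime 3) := ⟨by norm_num⟩
  have hcard : Nat.card ((ℚ⟮lam⟯ : IntermediateField ℚ K) ≃ₐ[ℚ] (ℚ⟮lam⟯ : IntermediateField ℚ K)) = 3 := by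
    rw [IsGalois.card_aut_eq_finrank, hfin]
  exact ⟨hfin, hgal, isCyclic_of_prime_card hcard⟩
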